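/- Let f(x) = ½·dist_K(x)² for a closed set K ⊆ ℝⁿ, and suppose x has a unique projection p = proj_K(x) with x ∉ K. Then f is differentiable at x with ∇f(x) = x - p = dist_K(x)·∇dist_K(x), where ∇dist_K(x) = (x - p)/‖x - p‖. -/

import Mathlib

open Metric Filter Asymptotics Topology
open scoped RealInnerProductSpace

theorem grad_half_sq_dist {n : ℕ} (K : Set (EuclideanSpace ℝ (Fin n)))
    (hKne : K.Nonempty) (hK : IsClosed K)
    (x p : EuclideanSpace ℝ (Fin n))
    (hxK : x ∉ K) (hp : p ∈ K)
    (hproj : ‖x - p‖ = Metric.infDist x K)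
    (huniq : ∀ q ∈ K, ‖x - q‖ = Metric.infDist x K → q = p) :
    HasGradientAt (fun y => (1/2) * (Metric.infDist y K)^2) (x - p) x ∧
    x - p = (Metric.infDist x K) • ((‖x - p‖)⁻¹ • (x - p)) := by
  classical
  let E := EuclideanSpace ℝ (Fin n)
  have hxp : x - p ≠ 0 := sub_ne_zero.2 (fun h => hxK (h ▸ hp))
  -- projection map
  have hex : ∀ y : E, ∃ q ∈ K, infDist y K = dist y q :=
    fun y => hK.exists_infDist_eq_dist hKne y
  set P : E → E := fun y => (hex y).choose with hPdef
  have hPK : ∀ y, P y ∈ K := fun y => (hex y).choose_spec.1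
  have hPd : ∀ y, infDist y K = dist y (P y) := fun y => (hex y).choose_spec.2
  -- continuity of projection at x
  have hPt : Tendsto P (𝓝 x) (𝓝 p) := by
    rw [tendsto_iff_seq_tendsto]
    intro u hu
    apply tendsto_of_subseq_tendsto
    intro ns hns
    have hu' : Tendsto (fun k => u (ns k)) atTop (𝓝 x) := hu.comp hns
    have hbdd : BddAbove (Set.range fun k => dist (u (ns k)) x) :=
      (hu'.dist tendsto_const_nhds).bddAbove_range
    obtain ⟨M, hM⟩ := hbdd
    have hM' : ∀ k, dist (u (ns k)) x ≤ M := fun k => hM ⟨k, rfl⟩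
    set R := infDist x K + 2 * M with hR
    have hC : IsCompact (K ∩ closedBall x R) :=
      (isCompact_closedBall x R).inter_left hK
    have hmem : ∀ k, P (u (ns k)) ∈ K ∩ closedBall x R := by
      intro k
      refine ⟨hPK _, ?_⟩
      rw [mem_closedBall]
      calc dist (P (u (ns k))) x
          ≤ dist (P (u (ns k))) (u (ns k)) + dist (u (ns k)) x := dist_triangle _ _ _
        _ = infDist (u (ns k)) K + dist (u (ns k)) x := by rw [dist_comm, ← hPd]
        _ ≤ (infDist x K + dist (u (ns k)) x) + dist (u (ns k)) x := by
            have := infDist_le_infDist_add_dist (x := u (ns k)) (y := x) (s := K)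
            linarith
        _ ≤ R := by have := hM' k; rw [hR]; linarith
    obtain ⟨q, hq, φ, hφ, hconv⟩ := hC.tendsto_subseq hmem
    refine ⟨φ, ?_⟩
    have huφ : Tendsto (fun j => u (ns (φ j))) atTop (𝓝 x) :=
      hu'.comp hφ.tendsto_atTop
    -- q = p
    have hdq : dist x q = infDist x K := by
      have h1 : Tendsto (fun j => dist (u (ns (φ j))) (P (u (ns (φ j))))) atTop
          (𝓝 (dist x q)) := huφ.dist hconv
      have h2 : Tendsto (fun j => dist (u (ns (φ j))) (P (u (ns (φ j))))) atTop
          (𝓝 (infDist x K)) := by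
        have : Tendsto (fun j => infDist (u (ns (φ j))) K) atTop (𝓝 (infDist x K)) :=
          ((continuous_infDist_pt K).tendsto x).comp huφ
        simpa only [hPd] using this
      exact tendsto_nhds_unique h1 h2
    have hqp : q = p := huniq q hq.1 (by rw [← dist_eq_norm, hdq])
    rw [← hqp]
    exact hconv
  -- key estimate
  set f : E → ℝ := fun y => (1/2) * (infDist y K)^2 with hf
  have hfx : f x = (1/2) * ‖x - p‖^2 := by simp only [hf]; rw [hproj]
  have hexp : ∀ y q : E, ‖y - q‖^2 = ‖y - x‖^2 + 2 * ⟪y - x, x - q⟫ + ‖x - q‖^2 := by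
    intro y q
    have : y - q = (y - x) + (x - q) := by abel
    rw [this, norm_add_sq_real]
  have hfle : ∀ (y : E) (q : E), q ∈ K → f y ≤ (1/2) * ‖y - q‖^2 := by
    intro y q hq
    have h1 : infDist y K ≤ ‖y - q‖ := by
      rw [← dist_eq_norm]; exact infDist_le_dist_of_mem hq
    have h0 : (0:ℝ) ≤ infDist y K := infDist_nonneg
    simp only [hf]
    nlinarith
  have hfeq : ∀ y : E, f y = (1/2) * ‖y - P y‖^2 := by
    intro y; rw [hf]; simp only [hPd y, dist_eq_norm]
  have key : ∀ y : E, |f y - f x - ⟪x - p, y - x⟫| ≤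
      ‖y - x‖ * (‖y - x‖/2 + ‖P y - p‖) := by
    intro y
    have hup : f y - f x - ⟪x - p, y - x⟫ ≤ (1/2) * ‖y - x‖^2 := by
      have h1 := hfle y p hp
      have h2 := hexp y p
      have h3 : ⟪x - p, y - x⟫ = ⟪y - x, x - p⟫ := real_inner_comm _ _
      rw [hfx]; linarith
    have hlo : -(‖y - x‖ * ‖P y - p‖) ≤ f y - f x - ⟪x - p, y - x⟫ := by
      have h1 := hfle x (P y) (hPK y)
      have h2 := hexp y (P y)
      have h3 : ⟪y - x, x - P y⟫ - ⟪x - p, y - x⟫ = ⟪y - x, p - P y⟫ := by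
        rw [real_inner_comm (y - x) (x - p), ← inner_sub_right]
        congr 1; abel
      have h4 : |⟪y - x, p - P y⟫| ≤ ‖y - x‖ * ‖P y - p‖ := by
        rw [norm_sub_rev (P y) p]; exact abs_real_inner_le_norm _ _
      have h6 := hfeq y
      have h7 := abs_le.1 h4
      have h8 : (0:ℝ) ≤ ‖y - x‖^2 := sq_nonneg _
      nlinarith [h7.1]
    rw [abs_le]
    constructor <;> nlinarith [norm_nonneg (y - x), norm_nonneg (P y - p), sq_nonneg (‖y - x‖)]
  -- little-o
  have hgrad : HasGradientAt f (x - p) x := by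
    rw [hasGradientAt_iff_isLittleO, isLittleO_iff]
    intro c hc
    have h0 : Tendsto (fun y : E => ‖y - x‖/2 + ‖P y - p‖) (𝓝 x) (𝓝 0) := by
      have h1 : Tendsto (fun y : E => ‖y - x‖/2) (𝓝 x) (𝓝 0) := by
        have : Tendsto (fun y : E => ‖y - x‖) (𝓝 x) (𝓝 0) :=
          tendsto_norm_sub_self x
        simpa using this.div_const 2
      have h2 : Tendsto (fun y : E => ‖P y - p‖) (𝓝 x) (𝓝 0) := by
        have := tendsto_iff_dist_tendsto_zero.1 hPt
        exact this.congr (fun y => dist_eq_norm (P y) p)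
      simpa using h1.add h2
    filter_upwards [h0.eventually (eventually_le_nhds hc)] with y hy
    calc ‖f y - f x - ⟪x - p, y - x⟫‖ = |f y - f x - ⟪x - p, y - x⟫| := rfl
      _ ≤ ‖y - x‖ * (‖y - x‖/2 + ‖P y - p‖) := key y
      _ ≤ ‖y - x‖ * c := by
          exact mul_le_mul_of_nonneg_left hy (norm_nonneg _)
      _ = c * ‖y - x‖ := mul_comm _ _
  refine ⟨hgrad, ?_⟩
  rw [← hproj, smul_smul, mul_inv_cancel₀ (norm_ne_zero_iff.2 hxp), one_smul]
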